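/- The normalized Euclidean distance d₂(x,y) := ‖x−y‖₂ / max{‖x‖₂, ‖y‖₂} (with d₂(0,0) := 0) is a metric on ℝᵏ: it is nonnegative, symmetric, vanishes exactly when x = y, and satisfies the triangle inequality. -/

import Mathlib

/-- The normalized Euclidean distance on `ℝᵏ`. When `x = y = 0` both numerator and
denominator are `0` and the value is `0` (Lean's `0/0 = 0` convention). -/
noncomputable def normEuclDist (k : ℕ) (x y : EuclideanSpace ℝ (Fin k)) : ℝ :=
  ‖x - y‖ / max ‖x‖ ‖y‖

lemma normEuclDist_nonneg (k : ℕ) (x y : EuclideanSpace ℝ (Fin k)) :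
    0 ≤ normEuclDist k x y :=
  div_nonneg (norm_nonneg _) (le_max_of_le_left (norm_nonneg _))

lemma normEuclDist_symm (k : ℕ) (x y : EuclideanSpace ℝ (Fin k)) :
    normEuclDist k x y = normEuclDist k y x := by
  unfold normEuclDist
  rw [norm_sub_rev, max_comm]

/-- The normalized Euclidean distance is a metric on `ℝᵏ`: nonnegative, symmetric,
vanishing exactly on the diagonal, and satisfying the triangle inequality. -/
theorem stmt1 (k : ℕ) :
    (∀ x y : EuclideanSpace ℝ (Fin k), 0 ≤ normEuclDist k x y) ∧
    (∀ x y : EuclideanSpace ℝ (Fin k), normEuclDist k x y = normEuclDist k y x) ∧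
    (∀ x y : EuclideanSpace ℝ (Fin k), normEuclDist k x y = 0 ↔ x = y) ∧
    (∀ x y z : EuclideanSpace ℝ (Fin k),
      normEuclDist k x y ≤ normEuclDist k x z + normEuclDist k z y) := by
  refine ⟨normEuclDist_nonneg k, normEuclDist_symm k, ?_, ?_⟩
  · intro x y
    constructor
    · intro h
      unfold normEuclDist at h
      rcases div_eq_zero_iff.mp h with h | h
      · exact sub_eq_zero.mp (norm_eq_zero.mp h)
      · have hx : ‖x‖ = 0 := le_antisymm ((le_max_left ‖x‖ ‖y‖).trans h.le) (norm_nonneg _)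
        have hy : ‖y‖ = 0 := le_antisymm ((le_max_right ‖x‖ ‖y‖).trans h.le) (norm_nonneg _)
        rw [norm_eq_zero.mp hx, norm_eq_zero.mp hy]
    · rintro rfl
      simp [normEuclDist]
  · intro x y z
    by_cases hxy : x = y
    · subst hxy
      have : normEuclDist k x x = 0 := by simp [normEuclDist]
      rw [this]
      exact add_nonneg (normEuclDist_nonneg k x z) (normEuclDist_nonneg k z x)
    by_cases hxz : x = z
    · subst hxz
      have : normEuclDist k x x = 0 := by simp [normEuclDist]
      rw [this, zero_add]
    by_cases hzy : z = y
    · subst hzy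
      have : normEuclDist k z z = 0 := by simp [normEuclDist]
      rw [this, add_zero]
    -- now x ≠ y, x ≠ z, z ≠ y
    have hm : 0 < max ‖x‖ ‖y‖ := by
      by_contra h
      push_neg at h
      exact hxy ((norm_le_zero_iff.mp ((le_max_left _ _).trans h)).trans
        (norm_le_zero_iff.mp ((le_max_right _ _).trans h)).symm)
    have hxz' : 0 < max ‖x‖ ‖z‖ := by
      by_contra h
      push_neg at h
      exact hxz ((norm_le_zero_iff.mp ((le_max_left _ _).trans h)).trans
        (norm_le_zero_iff.mp ((le_max_right _ _).trans h)).symm)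
    have hzy' : 0 < max ‖z‖ ‖y‖ := by
      by_contra h
      push_neg at h
      exact hzy ((norm_le_zero_iff.mp ((le_max_left _ _).trans h)).trans
        (norm_le_zero_iff.mp ((le_max_right _ _).trans h)).symm)
    unfold normEuclDist
    by_cases hc : ‖z‖ ≤ max ‖x‖ ‖y‖
    · have h1 : ‖x - z‖ / max ‖x‖ ‖y‖ ≤ ‖x - z‖ / max ‖x‖ ‖z‖ :=
        div_le_div_of_nonneg_left (norm_nonneg _) hxz'
          (max_le (le_max_left _ _) hc)
      have h2 : ‖z - y‖ / max ‖x‖ ‖y‖ ≤ ‖z - y‖ / max ‖z‖ ‖y‖ :=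
        div_le_div_of_nonneg_left (norm_nonneg _) hzy'
          (max_le hc (le_max_right _ _))
      calc ‖x - y‖ / max ‖x‖ ‖y‖
          ≤ (‖x - z‖ + ‖z - y‖) / max ‖x‖ ‖y‖ := by
            gcongr
            exact norm_sub_le_norm_sub_add_norm_sub x z y
        _ = ‖x - z‖ / max ‖x‖ ‖y‖ + ‖z - y‖ / max ‖x‖ ‖y‖ := add_div _ _ _
        _ ≤ _ := add_le_add h1 h2
    · push_neg at hc
      have hz : 0 < ‖z‖ := lt_of_le_of_lt hm.le hc
      have hmaxxz : max ‖x‖ ‖z‖ = ‖z‖ :=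
        max_eq_right ((le_max_left ‖x‖ ‖y‖).trans hc.le)
      have hmaxzy : max ‖z‖ ‖y‖ = ‖z‖ :=
        max_eq_left ((le_max_right ‖x‖ ‖y‖).trans hc.le)
      rw [hmaxxz, hmaxzy]
      -- Ptolemy: dist x y * dist z 0 ≤ dist x z * dist y 0 + dist z y * dist x 0
      have hpt := EuclideanGeometry.mul_dist_le_mul_dist_add_mul_dist x z y (0 : EuclideanSpace ℝ (Fin k))
      simp only [dist_eq_norm, sub_zero] at hpt
      rw [← add_div, div_le_div_iff₀ hm hz]
      calc ‖x - y‖ * ‖z‖ ≤ ‖x - z‖ * ‖y‖ + ‖z - y‖ * ‖x‖ := hpt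
        _ ≤ ‖x - z‖ * max ‖x‖ ‖y‖ + ‖z - y‖ * max ‖x‖ ‖y‖ := by
            gcongr
            · exact le_max_right _ _
            · exact le_max_left _ _
        _ = (‖x - z‖ + ‖z - y‖) * max ‖x‖ ‖y‖ := (add_mul _ _ _).symm
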